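/- arXiv:math/0511052 — 2 statements merged into one kernel-verified Lean document; each statement's English description precedes it below -/
import Mathlib

section
/- Let U be a standard normal random variable, σ > 0, r ∈ (0,2), and μ_r = E[|U|^r]. Let X_t = σ√t·U + X''_t where X''_t is independent of U and satisfies E[min(1, (X''_t)²/t)] → 0 as t → 0 and t^{−r/2} E[min(1,|X''_t|^r)] → 0 as t → 0. Then t^{−r/2} E[min(1,|X_t|^r)] → σ^r μ_r as t → 0. -/
open MeasureTheory ProbabilityTheory Filter Set
open scoped Topology ENNReal NNReal

noncomputable section

lemma stpm_integrable_one_add_sq_gaussian :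
    Integrable (fun x : ℝ => 1 + x ^ 2) (gaussianReal 0 1) := by
  rw [gaussianReal_of_var_ne_zero 0 one_ne_zero,
    integrable_withDensity_iff (measurable_gaussianPDF 0 1)
      (ae_of_all _ fun x => ENNReal.ofReal_lt_top)]
  have : (fun x : ℝ => (1 + x ^ 2) * (gaussianPDF 0 1 x).toReal)
      = fun x => (Real.sqrt (2 * Real.pi))⁻¹ *
        (Real.exp (-(1/2) * x ^ 2) + x ^ 2 * Real.exp (-(1/2) * x ^ 2)) := by
    funext x
    rw [gaussianPDF_def, ENNReal.toReal_ofReal (gaussianPDFReal_nonneg _ _ _),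
      gaussianPDFReal_def]
    push_cast
    ring_nf
  rw [this]
  have h2 : Integrable (fun x : ℝ => x ^ 2 * Real.exp (-(1/2) * x ^ 2)) := by
    have := integrable_rpow_mul_exp_neg_mul_sq (by norm_num : (0:ℝ) < 1/2)
      (by norm_num : (-1:ℝ) < 2)
    simpa [Real.rpow_natCast] using this
  exact ((integrable_exp_neg_mul_sq (by norm_num : (0:ℝ) < 1/2)).add h2).const_mul _

lemma stpm_integrable_abs_rpow_gaussian {r : ℝ} (hr0 : 0 < r) (hr2 : r ≤ 2) :
    Integrable (fun x : ℝ => |x| ^ r) (gaussianReal 0 1) := by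
  refine stpm_integrable_one_add_sq_gaussian.mono' ?_ (ae_of_all _ fun x => ?_)
  · exact ((Real.continuous_rpow_const hr0.le).measurable.comp
      measurable_abs).aestronglyMeasurable
  · rw [Real.norm_eq_abs, abs_of_nonneg (Real.rpow_nonneg (abs_nonneg x) r)]
    rcases le_or_gt |x| 1 with h | h
    · have : |x| ^ r ≤ 1 := Real.rpow_le_one (abs_nonneg x) h hr0.le
      nlinarith [sq_nonneg x]
    · have h2 : |x| ^ (2:ℝ) = x ^ 2 := by
        rw [show ((2:ℝ)) = ((2:ℕ):ℝ) by norm_num, Real.rpow_natCast, sq_abs]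
      have : |x| ^ r ≤ |x| ^ (2:ℝ) := Real.rpow_le_rpow_of_exponent_le h.le hr2
      rw [h2] at this
      linarith

lemma stpm_min_one_mul_le {K u : ℝ} (hK : 1 ≤ K) :
    min 1 (K * u) ≤ K * min 1 u := by
  rw [mul_min_of_nonneg _ _ (by linarith : (0:ℝ) ≤ K), mul_one]
  exact min_le_min hK le_rfl

lemma stpm_key_ineq {r ε : ℝ} (hr : 0 < r) (hε : 0 < ε) {x y : ℝ} (hx : 0 ≤ x) (hy : 0 ≤ y) :
    min 1 ((x + y) ^ r) ≤ (1 + ε) ^ r * min 1 (x ^ r) + (1 + 1/ε) ^ r * min 1 (y ^ r) := by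
  have h1ε : (0:ℝ) < 1/ε := by positivity
  have hε1 : (1:ℝ) ≤ (1 + ε) ^ r := Real.one_le_rpow (by linarith) hr.le
  have hε2 : (1:ℝ) ≤ (1 + 1/ε) ^ r := Real.one_le_rpow (by linarith) hr.le
  have hxr : (0:ℝ) ≤ min 1 (x ^ r) := le_min one_pos.le (Real.rpow_nonneg hx r)
  have hyr : (0:ℝ) ≤ min 1 (y ^ r) := le_min one_pos.le (Real.rpow_nonneg hy r)
  have hmax : x + y ≤ max ((1 + ε) * x) ((1 + 1/ε) * y) := by
    rcases le_or_gt y (ε * x) with h | h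
    · exact le_max_of_le_left (by nlinarith)
    · refine le_max_of_le_right ?_
      have : x ≤ (1/ε) * y := by
        rw [div_mul_eq_mul_div, le_div_iff₀ hε]
        nlinarith
      nlinarith
  have step1 : min 1 ((x + y) ^ r) ≤ min 1 ((max ((1+ε)*x) ((1+1/ε)*y)) ^ r) :=
    min_le_min le_rfl (Real.rpow_le_rpow (by linarith) hmax hr.le)
  refine step1.trans ?_
  rcases max_cases ((1+ε)*x) ((1+1/ε)*y) with ⟨hm, _⟩ | ⟨hm, _⟩ <;> rw [hm]
  · rw [Real.mul_rpow (by linarith) hx]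
    calc min 1 ((1+ε)^r * x^r) ≤ (1+ε)^r * min 1 (x^r) := stpm_min_one_mul_le hε1
      _ ≤ _ := by nlinarith
  · rw [Real.mul_rpow (by linarith) hy]
    calc min 1 ((1+1/ε)^r * y^r) ≤ (1+1/ε)^r * min 1 (y^r) := stpm_min_one_mul_le hε2
      _ ≤ _ := by nlinarith

lemma stpm_integrable_min_one {Ω : Type*} [MeasurableSpace Ω] (P : Measure Ω)
    [IsProbabilityMeasure P] {g : Ω → ℝ} (hg : Measurable g) {r : ℝ} (hr : 0 ≤ r) :
    Integrable (fun ω => min 1 (|g ω| ^ r)) P := by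
  refine (integrable_const (1:ℝ)).mono' ?_ (ae_of_all _ fun ω => ?_)
  · exact (measurable_const.min
      ((Real.continuous_rpow_const hr).measurable.comp hg.abs)).aestronglyMeasurable
  · rw [Real.norm_eq_abs, abs_of_nonneg (le_min one_pos.le (Real.rpow_nonneg (abs_nonneg _) r))]
    simp [min_le_left]

lemma stpm_rpow_neg_tendsto_atTop {s : ℝ} (hs : 0 < s) :
    Tendsto (fun t : ℝ => t ^ (-s)) (𝓝[>] (0:ℝ)) atTop := by
  have h1 : Tendsto (fun t : ℝ => t ^ s) (𝓝[>] (0:ℝ)) (𝓝[>] 0) := by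
    refine tendsto_nhdsWithin_of_tendsto_nhds_of_eventually_within _ ?_ ?_
    · have : ContinuousAt (fun t : ℝ => t ^ s) 0 :=
        Real.continuousAt_rpow_const 0 s (Or.inr hs.le)
      simpa [Real.zero_rpow hs.ne'] using (this.tendsto.mono_left nhdsWithin_le_nhds)
    · filter_upwards [self_mem_nhdsWithin] with t ht
      exact Real.rpow_pos_of_pos ht s
  have h2 : Tendsto (fun x : ℝ => x⁻¹) (𝓝[>] (0:ℝ)) atTop := tendsto_inv_nhdsGT_zero
  refine (h2.comp h1).congr' ?_
  filter_upwards [self_mem_nhdsWithin] with t ht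
  simp [Function.comp, Real.rpow_neg (le_of_lt ht)]

lemma stpm_gauss_limit {Ω : Type*} [MeasurableSpace Ω] (P : Measure Ω) [IsProbabilityMeasure P]
    {U : Ω → ℝ} (hU : Measurable U) (hUlaw : Measure.map U P = gaussianReal 0 1)
    {σ r : ℝ} (hσ : 0 < σ) (hr0 : 0 < r) (hr2 : r < 2) :
    Tendsto (fun t : ℝ => t ^ (-(r/2)) * ∫ ω, min 1 (|σ * Real.sqrt t * U ω| ^ r) ∂P)
      (𝓝[>] (0:ℝ)) (𝓝 (σ ^ r * ∫ x, |x| ^ r ∂gaussianReal 0 1)) := by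
  have hmeas : ∀ t : ℝ, Measurable fun x : ℝ => min (t ^ (-(r/2))) (σ ^ r * |x| ^ r) :=
    fun t => measurable_const.min
      (((Real.continuous_rpow_const hr0.le).measurable.comp measurable_abs).const_mul _)
  have heq : ∀ᶠ t in 𝓝[>] (0:ℝ),
      t ^ (-(r/2)) * ∫ ω, min 1 (|σ * Real.sqrt t * U ω| ^ r) ∂P
        = ∫ x, min (t ^ (-(r/2))) (σ ^ r * |x| ^ r) ∂gaussianReal 0 1 := by
    filter_upwards [self_mem_nhdsWithin] with t (ht : 0 < t)
    have hpt : ∀ x : ℝ, t ^ (-(r/2)) * min 1 (|σ * Real.sqrt t * x| ^ r)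
        = min (t ^ (-(r/2))) (σ ^ r * |x| ^ r) := by
      intro x
      have habs : |σ * Real.sqrt t * x| = σ * Real.sqrt t * |x| := by
        rw [abs_mul, abs_mul, abs_of_pos hσ, abs_of_nonneg (Real.sqrt_nonneg t)]
      have hsqrt : (Real.sqrt t) ^ r = t ^ (r/2) := by
        rw [Real.sqrt_eq_rpow, ← Real.rpow_mul ht.le]
        congr 1
        ring
      have hrpow : (σ * Real.sqrt t * |x|) ^ r = σ ^ r * t ^ (r/2) * |x| ^ r := by
        rw [Real.mul_rpow (by positivity) (abs_nonneg x),
          Real.mul_rpow hσ.le (Real.sqrt_nonneg t), hsqrt]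
      have hcancel : t ^ (-(r/2)) * (σ ^ r * t ^ (r/2) * |x| ^ r) = σ ^ r * |x| ^ r := by
        rw [show t ^ (-(r/2)) * (σ ^ r * t ^ (r/2) * |x| ^ r)
            = (t ^ (-(r/2)) * t ^ (r/2)) * (σ ^ r * |x| ^ r) by ring,
          ← Real.rpow_add ht, neg_add_cancel, Real.rpow_zero, one_mul]
      rw [habs, hrpow, mul_min_of_nonneg _ _ (Real.rpow_nonneg ht.le _), mul_one, hcancel]
    rw [← integral_const_mul]
    simp_rw [hpt]
    rw [← hUlaw, integral_map hU.aemeasurable (hmeas t).aestronglyMeasurable]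
  rw [tendsto_congr' heq, show σ ^ r * ∫ x, |x| ^ r ∂gaussianReal 0 1
    = ∫ x, σ ^ r * |x| ^ r ∂gaussianReal 0 1 from (integral_const_mul _ _).symm]
  refine tendsto_integral_filter_of_dominated_convergence (fun x => σ ^ r * |x| ^ r)
    (Eventually.of_forall fun t => (hmeas t).aestronglyMeasurable) ?_ ?_ ?_
  · filter_upwards [self_mem_nhdsWithin] with t (ht : 0 < t)
    refine ae_of_all _ fun x => ?_
    have h0 : (0:ℝ) ≤ min (t ^ (-(r/2))) (σ ^ r * |x| ^ r) :=
      le_min (Real.rpow_nonneg ht.le _) (by positivity)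
    rw [Real.norm_eq_abs, abs_of_nonneg h0]
    exact min_le_right _ _
  · exact (stpm_integrable_abs_rpow_gaussian hr0 hr2.le).const_mul _
  · refine ae_of_all _ fun x => ?_
    have h := (stpm_rpow_neg_tendsto_atTop (by positivity : (0:ℝ) < r/2)).eventually_ge_atTop
      (σ ^ r * |x| ^ r)
    refine Tendsto.congr' ?_ tendsto_const_nhds
    filter_upwards [h] with t ht
    exact (min_eq_right ht).symm

theorem small_time_power_moment_gaussian_limit {Ω : Type*} [MeasurableSpace Ω]
    (P : Measure Ω) [IsProbabilityMeasure P]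
    (U : Ω → ℝ) (X'' : ℝ → Ω → ℝ) (X : ℝ → Ω → ℝ) (σ r : ℝ)
    (hσ : 0 < σ) (hr0 : 0 < r) (hr2 : r < 2)
    (hU : Measurable U) (hUlaw : Measure.map U P = gaussianReal 0 1)
    (hX'' : ∀ t, Measurable (X'' t))
    (hindep : ∀ t, 0 < t → IndepFun U (X'' t) P)
    (h1 : Tendsto (fun t : ℝ => ∫ ω, min 1 ((X'' t ω) ^ 2 / t) ∂P) (𝓝[>] 0) (𝓝 0))
    (h2 : Tendsto (fun t : ℝ => t ^ (-(r / 2)) * ∫ ω, min 1 (|X'' t ω| ^ r) ∂P)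
      (𝓝[>] 0) (𝓝 0))
    (hX : ∀ t ω, X t ω = σ * Real.sqrt t * U ω + X'' t ω) :
    Tendsto (fun t : ℝ => t ^ (-(r / 2)) * ∫ ω, min 1 (|X t ω| ^ r) ∂P) (𝓝[>] 0)
      (𝓝 (σ ^ r * ∫ x, |x| ^ r ∂gaussianReal 0 1)) := by
  set L : ℝ := σ ^ r * ∫ x, |x| ^ r ∂gaussianReal 0 1 with hLdef
  have hL : 0 ≤ L :=
    mul_nonneg (Real.rpow_nonneg hσ.le r)
      (integral_nonneg fun x => Real.rpow_nonneg (abs_nonneg x) r)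
  set f : ℝ → ℝ := fun t => t ^ (-(r / 2)) * ∫ ω, min 1 (|X t ω| ^ r) ∂P with hfdef
  set g : ℝ → ℝ :=
    fun t => t ^ (-(r / 2)) * ∫ ω, min 1 (|σ * Real.sqrt t * U ω| ^ r) ∂P with hgdef
  set e : ℝ → ℝ := fun t => t ^ (-(r / 2)) * ∫ ω, min 1 (|X'' t ω| ^ r) ∂P with hedef
  have hg : Tendsto g (𝓝[>] 0) (𝓝 L) := stpm_gauss_limit P hU hUlaw hσ hr0 hr2
  have he : Tendsto e (𝓝[>] 0) (𝓝 0) := h2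
  have hXm : ∀ t, Measurable (X t) := by
    intro t
    have : Measurable fun ω => σ * Real.sqrt t * U ω + X'' t ω :=
      (hU.const_mul _).add (hX'' t)
    convert this using 1
    funext ω; exact hX t ω
  have hInt : ∀ (q : Ω → ℝ), Measurable q → Integrable (fun ω => min 1 (|q ω| ^ r)) P :=
    fun q hq => stpm_integrable_min_one P hq hr0.le
  -- master integral inequality
  have key2 : ∀ (a b : Ω → ℝ), Measurable a → Measurable b → ∀ {ε : ℝ}, 0 < ε →
      ∫ ω, min 1 (|a ω + b ω| ^ r) ∂P
        ≤ (1+ε)^r * ∫ ω, min 1 (|a ω| ^ r) ∂P + (1+1/ε)^r * ∫ ω, min 1 (|b ω| ^ r) ∂P := by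
    intro a b ha hb ε hε
    have hsum : Integrable
        (fun ω => (1+ε)^r * min 1 (|a ω| ^ r) + (1+1/ε)^r * min 1 (|b ω| ^ r)) P :=
      ((hInt a ha).const_mul _).add ((hInt b hb).const_mul _)
    have hle : ∫ ω, min 1 (|a ω + b ω| ^ r) ∂P
        ≤ ∫ ω, ((1+ε)^r * min 1 (|a ω| ^ r) + (1+1/ε)^r * min 1 (|b ω| ^ r)) ∂P := by
      refine integral_mono (hInt _ (ha.add hb)) hsum fun ω => ?_
      have h1 : min 1 (|a ω + b ω| ^ r) ≤ min 1 ((|a ω| + |b ω|) ^ r) :=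
        min_le_min le_rfl (Real.rpow_le_rpow (abs_nonneg _) (abs_add_le _ _) hr0.le)
      exact h1.trans (stpm_key_ineq hr0 hε (abs_nonneg _) (abs_nonneg _))
    rwa [integral_add ((hInt a ha).const_mul _) ((hInt b hb).const_mul _),
      integral_const_mul, integral_const_mul] at hle
  -- upper and lower bounds on f in terms of g and e
  have hBound : ∀ {ε : ℝ}, 0 < ε → ∀ {t : ℝ}, 0 < t →
      f t ≤ (1+ε)^r * g t + (1+1/ε)^r * e t ∧
      g t ≤ (1+ε)^r * f t + (1+1/ε)^r * e t := by
    intro ε hε t ht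
    have htr : (0:ℝ) ≤ t ^ (-(r/2)) := Real.rpow_nonneg ht.le _
    constructor
    · have h := key2 (fun ω => σ * Real.sqrt t * U ω) (X'' t) (hU.const_mul _) (hX'' t) hε
      have hXeq : (fun ω => min 1 (|X t ω| ^ r))
          = fun ω => min 1 (|σ * Real.sqrt t * U ω + X'' t ω| ^ r) := by
        funext ω; rw [hX t ω]
      calc f t = t ^ (-(r/2)) * ∫ ω, min 1 (|σ * Real.sqrt t * U ω + X'' t ω| ^ r) ∂P := by
              rw [hfdef]; simp only [hXeq]
        _ ≤ t ^ (-(r/2)) * ((1+ε)^r * ∫ ω, min 1 (|σ * Real.sqrt t * U ω| ^ r) ∂P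
              + (1+1/ε)^r * ∫ ω, min 1 (|X'' t ω| ^ r) ∂P) :=
            mul_le_mul_of_nonneg_left h htr
        _ = (1+ε)^r * g t + (1+1/ε)^r * e t := by rw [hgdef, hedef]; ring
    · have h := key2 (X t) (fun ω => -(X'' t ω)) (hXm t) (hX'' t).neg hε
      have hXeq : (fun ω => min 1 (|X t ω + -(X'' t ω)| ^ r))
          = fun ω => min 1 (|σ * Real.sqrt t * U ω| ^ r) := by
        funext ω
        rw [hX t ω]
        ring_nf
      rw [hXeq] at h
      simp only [abs_neg] at h
      calc g t ≤ t ^ (-(r/2)) * ((1+ε)^r * ∫ ω, min 1 (|X t ω| ^ r) ∂P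
              + (1+1/ε)^r * ∫ ω, min 1 (|X'' t ω| ^ r) ∂P) :=
            mul_le_mul_of_nonneg_left h htr
        _ = (1+ε)^r * f t + (1+1/ε)^r * e t := by rw [hfdef, hedef]; ring
  have hf0 : ∀ {t : ℝ}, 0 < t → 0 ≤ f t := by
    intro t ht
    refine mul_nonneg (Real.rpow_nonneg ht.le _) (integral_nonneg fun ω => ?_)
    exact le_min one_pos.le (Real.rpow_nonneg (abs_nonneg _) r)
  -- epsilon-delta conclusion
  rw [Metric.tendsto_nhds]
  intro δ hδ
  set c : ℝ := δ / (2 * (L + δ + 1)) with hcdef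
  have hc : 0 < c := by positivity
  have hcL : c * (L + δ + 1) = δ / 2 := by
    rw [hcdef]; field_simp
  -- find ε with (1+ε)^r < 1 + c
  have hcont : Tendsto (fun ε : ℝ => (1+ε)^r) (𝓝[>] (0:ℝ)) (𝓝 1) := by
    have h0 : Tendsto (fun ε : ℝ => 1 + ε) (𝓝[>] (0:ℝ)) (𝓝 1) := by
      simpa using ((continuous_add_left (1:ℝ)).tendsto (0:ℝ)).mono_left
        (nhdsWithin_le_nhds (s := Set.Ioi (0:ℝ)))
    simpa using h0.rpow_const (Or.inr hr0.le)
  obtain ⟨ε, hεc, hε0⟩ :=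
    ((hcont.eventually_lt_const (by linarith : (1:ℝ) < 1 + c)).and self_mem_nhdsWithin).exists
  have hε0 : (0:ℝ) < ε := hε0
  have hA1 : (1:ℝ) ≤ (1+ε)^r := Real.one_le_rpow (by linarith) hr0.le
  have heK : Tendsto (fun t => (1+1/ε)^r * e t) (𝓝[>] (0:ℝ)) (𝓝 0) := by
    simpa using he.const_mul ((1+1/ε)^r)
  filter_upwards [self_mem_nhdsWithin,
    hg.eventually_lt_const (by linarith : L < L + δ/4),
    hg.eventually_const_lt (by linarith : L - δ/4 < L),
    heK.eventually_lt_const (by linarith : (0:ℝ) < δ/4)] with t ht h_u h_l h_e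
  obtain ⟨hb1, hb2⟩ := hBound hε0 ht
  rw [Real.dist_eq, abs_sub_lt_iff]
  constructor
  · -- f t - L < δ
    have h1 : (1+ε)^r * g t ≤ (1+ε)^r * (L + δ/4) :=
      mul_le_mul_of_nonneg_left h_u.le (by linarith)
    have h2 : (1+ε)^r * (L+δ/4) ≤ (1+c)*(L+δ/4) :=
      mul_le_mul_of_nonneg_right hεc.le (by linarith)
    nlinarith [hcL, hc.le, hL, hδ]
  · have h3 : (1+ε)^r * f t ≤ (1+c) * f t :=
      mul_le_mul_of_nonneg_right hεc.le (hf0 ht)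
    nlinarith [hcL, hc.le, hL, hδ, hf0 ht]
end
end

section
/- Let X be a Lévy process with c = 0, ∫ min(1,|x|) F(dx) < ∞, drift b̄ ≠ 0, and let 0 < r < 1. Write X_t = b̄t + X'_t where X'_t is the pure-jump part, and assume t^{−r} E[min(1,|X'_t|^r)] → 0 as t → 0. Then t^{−r} E[min(1,|X_t|^r)] → |b̄|^r as t → 0. -/
open MeasureTheory ProbabilityTheory Filter Set
open scoped Topology ENNReal NNReal

noncomputable section

/-- `X` is a Lévy process with characteristics `(b, c, F)` under `P`:
càdlàg paths starting at `0`, stationary independent increments, and the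
Lévy–Khintchine formula for its characteristic function. -/
structure IsLevy {Ω : Type*} [MeasurableSpace Ω] (P : Measure Ω)
    (X : ℝ → Ω → ℝ) (b c : ℝ) (F : Measure ℝ) : Prop where
  meas : ∀ t, Measurable (X t)
  start : ∀ ω, X 0 ω = 0
  cadlag : ∀ ω, ∀ t : ℝ, ContinuousWithinAt (fun s => X s ω) (Set.Ici t) t ∧
    ∃ l : ℝ, Filter.Tendsto (fun s => X s ω) (𝓝[<] t) (𝓝 l)
  indep_incr : ∀ (n : ℕ) (t : ℕ → ℝ), Monotone t →
    iIndepFun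
      (fun i : Fin n => fun ω => X (t (i.1 + 1)) ω - X (t i.1) ω) P
  stat_incr : ∀ s t : ℝ, 0 ≤ s → 0 ≤ t →
    Measure.map (fun ω => X (s + t) ω - X s ω) P = Measure.map (X t) P
  c_nonneg : 0 ≤ c
  F_zero : F {0} = 0
  F_int : ∫⁻ x, ENNReal.ofReal (min (x ^ 2) 1) ∂F ≠ ∞
  levy_khintchine : ∀ (u t : ℝ), 0 ≤ t →
    ∫ ω, Complex.exp (Complex.I * u * X t ω) ∂P =
      Complex.exp (t * (Complex.I * u * b - c * u ^ 2 / 2 +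
        ∫ x : ℝ, (Complex.exp (Complex.I * u * x) - 1 -
          (if |x| ≤ 1 then Complex.I * u * x else 0)) ∂F))


lemma aux_rpow_add_le {a b r : ℝ} (ha : 0 ≤ a) (hb : 0 ≤ b) (hr0 : 0 ≤ r) (hr1 : r ≤ 1) :
    (a + b) ^ r ≤ a ^ r + b ^ r := by
  have h := NNReal.rpow_add_le_add_rpow a.toNNReal b.toNNReal hr0 hr1
  have h2 := NNReal.coe_le_coe.2 h
  rw [← Real.toNNReal_add ha hb] at h2
  simpa [NNReal.coe_rpow, Real.coe_toNNReal, ha, hb, add_nonneg ha hb] using h2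

lemma aux_min_subadd {b c : ℝ} (hb : 0 ≤ b) (hc : 0 ≤ c) {a : ℝ} (hab : a ≤ b + c) :
    min 1 a ≤ min 1 b + min 1 c := by
  rcases le_or_gt 1 b with h | h
  · have : min 1 b = 1 := min_eq_left h
    have h2 : 0 ≤ min 1 c := le_min (by norm_num) hc
    calc min 1 a ≤ 1 := min_le_left _ _
    _ ≤ min 1 b + min 1 c := by rw [this]; linarith
  rcases le_or_gt 1 c with h' | h'
  · have : min 1 c = 1 := min_eq_left h'
    have h2 : 0 ≤ min 1 b := le_min (by norm_num) hb
    calc min 1 a ≤ 1 := min_le_left _ _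
    _ ≤ min 1 b + min 1 c := by rw [this]; linarith
  · rw [min_eq_right h.le, min_eq_right h'.le]
    exact le_trans (min_le_right _ _) hab

lemma aux_key {r : ℝ} (hr0 : 0 < r) (hr1 : r ≤ 1) (x y : ℝ) :
    |min 1 (|x| ^ r) - min 1 (|y| ^ r)| ≤ min 1 (|x - y| ^ r) := by
  have key : ∀ u v : ℝ, min 1 (|u| ^ r) - min 1 (|v| ^ r) ≤ min 1 (|u - v| ^ r) := by
    intro u v
    have h1 : |u| ≤ |v| + |u - v| := by
      calc |u| = |v + (u - v)| := by ring_nf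
      _ ≤ |v| + |u - v| := abs_add_le _ _
    have h2 : |u| ^ r ≤ (|v| + |u - v|) ^ r :=
      Real.rpow_le_rpow (abs_nonneg _) h1 hr0.le
    have h3 : (|v| + |u - v|) ^ r ≤ |v| ^ r + |u - v| ^ r :=
      aux_rpow_add_le (abs_nonneg _) (abs_nonneg _) hr0.le hr1
    have h4 := aux_min_subadd (Real.rpow_nonneg (abs_nonneg v) r)
      (Real.rpow_nonneg (abs_nonneg _) r) (h2.trans h3)
    linarith
  rw [abs_sub_le_iff]
  refine ⟨key x y, ?_⟩
  have := key y x
  rwa [show y - x = -(x - y) by ring, abs_neg] at this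

theorem drift_dominates_fractional_moment {Ω : Type*} [MeasurableSpace Ω]
    (P : Measure Ω) [IsProbabilityMeasure P] (X : ℝ → Ω → ℝ) (b : ℝ) (F : Measure ℝ)
    (hX : IsLevy P X b 0 F)
    (hFV : ∫⁻ x, ENNReal.ofReal (min 1 |x|) ∂F ≠ ∞)
    (bbar : ℝ) (hbbar : bbar = b - ∫ x in Set.Icc (-1:ℝ) 1, x ∂F) (hb : bbar ≠ 0)
    (r : ℝ) (hr0 : 0 < r) (hr1 : r < 1)
    (hX' : Tendsto (fun t : ℝ => t ^ (-r) * ∫ ω, min 1 (|X t ω - bbar * t| ^ r) ∂P)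
      (𝓝[>] 0) (𝓝 0)) :
    Tendsto (fun t : ℝ => t ^ (-r) * ∫ ω, min 1 (|X t ω| ^ r) ∂P) (𝓝[>] 0)
      (𝓝 (|bbar| ^ r)) := by
  
  have hmeas : ∀ t : ℝ, Measurable (X t) := hX.meas
  -- integrability of the bounded integrands
  have hint : ∀ (Y : Ω → ℝ), Measurable Y → Integrable (fun ω => min 1 (|Y ω| ^ r)) P := by
    intro Y hY
    have hm : Measurable (fun ω => min 1 (|Y ω| ^ r)) :=
      (measurable_const.min (hY.abs.pow measurable_const))
    refine ⟨hm.aestronglyMeasurable, ?_⟩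
    apply HasFiniteIntegral.of_bounded (C := 1)
    filter_upwards with ω
    have h0 : 0 ≤ min 1 (|Y ω| ^ r) :=
      le_min (by norm_num) (Real.rpow_nonneg (abs_nonneg _) r)
    rw [Real.norm_eq_abs, abs_of_nonneg h0]
    exact min_le_left _ _
  rw [tendsto_iff_dist_tendsto_zero]
  refine squeeze_zero' (Eventually.of_forall fun _ => dist_nonneg) ?_ hX'
  have hmem : Set.Ioo (0:ℝ) (1 / |bbar|) ∈ 𝓝[>] (0:ℝ) :=
    Ioo_mem_nhdsGT_of_mem ⟨le_refl _, by positivity⟩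
  filter_upwards [hmem] with t ht
  obtain ⟨ht0, ht1⟩ := ht
  -- pointwise bound
  have hpt : ∀ ω, |min 1 (|X t ω| ^ r) - min 1 (|bbar * t| ^ r)| ≤
      min 1 (|X t ω - bbar * t| ^ r) := fun ω => by
    have := aux_key hr0 hr1.le (X t ω) (bbar * t)
    simpa using this
  have hInt1 := hint (X t) (hmeas t)
  have hInt2 := hint (fun ω => X t ω - bbar * t) ((hmeas t).sub measurable_const)
  -- integral bound
  have hIb : |(∫ ω, min 1 (|X t ω| ^ r) ∂P) - min 1 (|bbar * t| ^ r)| ≤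
      ∫ ω, min 1 (|X t ω - bbar * t| ^ r) ∂P := by
    have hconst : (min 1 (|bbar * t| ^ r)) = ∫ _ : Ω, min 1 (|bbar * t| ^ r) ∂P := by
      simp
    rw [hconst, ← integral_sub hInt1 (integrable_const _)]
    calc |∫ ω, (min 1 (|X t ω| ^ r) - min 1 (|bbar * t| ^ r)) ∂P|
        ≤ ∫ ω, |min 1 (|X t ω| ^ r) - min 1 (|bbar * t| ^ r)| ∂P :=
          by simpa [Real.norm_eq_abs] using
            norm_integral_le_integral_norm (μ := P)
              (f := fun ω => min 1 (|X t ω| ^ r) - min 1 (|bbar * t| ^ r))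
      _ ≤ ∫ ω, min 1 (|X t ω - bbar * t| ^ r) ∂P := by
          refine integral_mono_of_nonneg (Eventually.of_forall fun ω => abs_nonneg _)
            hInt2 (Eventually.of_forall hpt)
  -- compute the constant term
  have habs : |bbar * t| ≤ 1 := by
    rw [abs_mul, abs_of_pos ht0]
    rw [lt_div_iff₀ (abs_pos.2 hb)] at ht1
    nlinarith [abs_nonneg bbar]
  have hc : min 1 (|bbar * t| ^ r) = |bbar| ^ r * t ^ r := by
    rw [min_eq_right, abs_mul, abs_of_pos ht0,
      Real.mul_rpow (abs_nonneg _) ht0.le]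
    calc |bbar * t| ^ r ≤ 1 ^ r := Real.rpow_le_rpow (abs_nonneg _) habs hr0.le
    _ = 1 := Real.one_rpow r
  have htr : t ^ (-r) * t ^ r = 1 := by
    rw [← Real.rpow_add ht0]; simp
  have htpos : 0 < t ^ (-r) := Real.rpow_pos_of_pos ht0 _
  have hcc : t ^ (-r) * min 1 (|bbar * t| ^ r) = |bbar| ^ r := by
    rw [hc]
    calc t ^ (-r) * (|bbar| ^ r * t ^ r) = |bbar| ^ r * (t ^ (-r) * t ^ r) := by ring
    _ = |bbar| ^ r := by rw [htr, mul_one]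
  rw [Real.dist_eq]
  calc |t ^ (-r) * (∫ ω, min 1 (|X t ω| ^ r) ∂P) - |bbar| ^ r|
      = t ^ (-r) * |(∫ ω, min 1 (|X t ω| ^ r) ∂P) - min 1 (|bbar * t| ^ r)| := by
        rw [← hcc, ← mul_sub, abs_mul, abs_of_pos htpos]
    _ ≤ t ^ (-r) * ∫ ω, min 1 (|X t ω - bbar * t| ^ r) ∂P :=
        mul_le_mul_of_nonneg_left hIb htpos.le
end
end
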